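/- There exists a polynomial F(x,t,y₁,y₂) = x·y₁² − (x+t)·y₂² with coefficients in K[x,t] such that for every c ∈ ℕ there exist polynomials y₁^{(c)}, y₂^{(c)} ∈ K[x,t] with F(x,t,y₁^{(c)},y₂^{(c)}) ∈ (t)^{c+1} and y₂^{(c)} ∉ (t), yet the only solution (y₁,y₂) ∈ K[[x,t]]² of F(x,t,y₁,y₂) = 0 is (0,0). -/

import Mathlib

open Polynomial in
lemma sqrtpoly (K : Type*) [RCLike K] (c : ℕ) :
    ∃ S : Polynomial K, S.coeff 0 = 1 ∧ (X : Polynomial K)^(c+1) ∣ S^2 - (1 + X) := by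
  induction c with
  | zero =>
    exact ⟨1, by simp, ⟨-1, by ring⟩⟩
  | succ c ih =>
    obtain ⟨S, hS0, g, hg⟩ := ih
    set b : K := -(g.coeff 0) / 2 with hb
    refine ⟨S + C b * X^(c+1), ?_, ?_⟩
    · simp [hS0]
    · have key : (S + C b * X^(c+1))^2 - (1+X)
          = X^(c+1) * (g + (C b * 2) * S + (C b)^2 * X^(c+1)) := by
        linear_combination hg
      rw [key, pow_succ]
      refine mul_dvd_mul dvd_rfl ?_
      rw [X_dvd_iff]
      have h2 : (2:K) ≠ 0 := two_ne_zero
      simp [hS0, coeff_one, hb]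

open Polynomial

lemma sum_monomial_coeff {R : Type*} [Semiring R] (N : ℕ) (f : ℕ → R) (p : ℕ) :
    (∑ n ∈ Finset.range N, monomial n (f n)).coeff p = if p < N then f p else 0 := by
  rw [finset_sum_coeff]
  simp only [coeff_monomial]
  rw [Finset.sum_ite_eq' (Finset.range N) p f]
  simp

lemma homog_dvd (K : Type*) [RCLike K] (c : ℕ) (S : Polynomial K)
    (hdvd : (X : Polynomial K)^(c+1) ∣ S^2 - (1 + X)) :
    (X : Polynomial (Polynomial K))^(c+1) ∣
      C X * (∑ n ∈ Finset.range (c+1), monomial n (C (S.coeff n) * X^(c-n)))^2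
        - (C X + X) * (C X)^(2*c) := by
  classical
  set Y : Polynomial (Polynomial K) :=
    ∑ n ∈ Finset.range (c+1), monomial n (C (S.coeff n) * X^(c-n)) with hY
  have hYc : ∀ p, Y.coeff p = if p < c+1 then C (S.coeff p) * X^(c-p) else 0 := by
    intro p; rw [hY, sum_monomial_coeff]
  rw [X_pow_dvd_iff]
  intro k hk
  have hSk : (S^2).coeff k = (1 + X : Polynomial K).coeff k := by
    have := X_pow_dvd_iff.mp hdvd k hk
    rw [coeff_sub, sub_eq_zero] at this
    exact this
  have h1 : (C X * Y^2).coeff k = C ((S^2).coeff k) * X^(2*c+1-k) := by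
    rw [sq, sq, coeff_C_mul, coeff_mul, coeff_mul, map_sum, Finset.sum_mul,
      Finset.mul_sum]
    refine Finset.sum_congr rfl ?_
    rintro ⟨i, j⟩ hij
    rw [Finset.HasAntidiagonal.mem_antidiagonal] at hij
    have hi : i < c + 1 := by omega
    have hj : j < c + 1 := by omega
    rw [hYc, hYc, if_pos hi, if_pos hj, map_mul]
    have hexp : (c - i) + (c - j) + 1 = 2*c+1-k := by omega
    rw [show (X : Polynomial K) * (C (S.coeff i) * X ^ (c - i) * (C (S.coeff j) * X ^ (c - j)))
        = C (S.coeff i) * C (S.coeff j) * X ^ ((c-i) + (c-j) + 1) by ring, hexp]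
  have h3 : ((C X + X) * (C X)^(2*c)).coeff k
      = C ((1 + X : Polynomial K).coeff k) * X^(2*c+1-k) := by
    have : ((C X + X) * (C X)^(2*c) : Polynomial (Polynomial K))
        = C (X^(2*c+1)) + X * C (X^(2*c)) := by
      rw [map_pow, map_pow]; ring
    rw [this]
    match k, hk with
    | 0, _ =>
      simp [coeff_one, coeff_C, mul_coeff_zero, -map_pow]
    | 1, hk =>
      have hc : 2*c+1-1 = 2*c := by omega
      simp [coeff_one, coeff_C, hc, coeff_X_mul, -map_pow]
    | (n+2), _ => simp [coeff_one, coeff_C, coeff_X_mul, coeff_X, -map_pow]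
  rw [coeff_sub, h1, hSk, h3, sub_self]
open Polynomial

noncomputable def Phi (K : Type*) [CommRing K] :
    Polynomial (Polynomial K) →+* MvPolynomial (Fin 2) K :=
  Polynomial.eval₂RingHom
    (Polynomial.eval₂RingHom (MvPolynomial.C) (MvPolynomial.X 0))
    (MvPolynomial.X 1)

@[simp] lemma Phi_X (K : Type*) [CommRing K] :
    Phi K (X : Polynomial (Polynomial K)) = MvPolynomial.X 1 := by
  simp [Phi]

@[simp] lemma Phi_CX (K : Type*) [CommRing K] :
    Phi K (C (X : Polynomial K)) = MvPolynomial.X 0 := by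
  simp [Phi]

lemma part1 (K : Type*) [RCLike K] (c : ℕ) :
    ∃ y₁ y₂ : MvPolynomial (Fin 2) K,
      MvPolynomial.X 0 * y₁ ^ 2 - (MvPolynomial.X 0 + MvPolynomial.X 1) * y₂ ^ 2
        ∈ (Ideal.span {(MvPolynomial.X 1 : MvPolynomial (Fin 2) K)}) ^ (c + 1)
      ∧ y₂ ∉ Ideal.span {(MvPolynomial.X 1 : MvPolynomial (Fin 2) K)} := by
  obtain ⟨S, hS0, hdvd⟩ := sqrtpoly K c
  have key := homog_dvd K c S hdvd
  set Y : Polynomial (Polynomial K) :=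
    ∑ n ∈ Finset.range (c+1), monomial n (C (S.coeff n) * X^(c-n)) with hY
  refine ⟨Phi K Y, MvPolynomial.X 0 ^ c, ?_, ?_⟩
  · rw [Ideal.span_singleton_pow, Ideal.mem_span_singleton]
    obtain ⟨E, hE⟩ := key
    have := congrArg (Phi K) hE
    rw [map_sub, map_mul, map_mul, map_mul, map_add, map_pow, map_pow, map_pow,
      Phi_X, Phi_CX] at this
    refine ⟨Phi K E, ?_⟩
    rw [← pow_mul, mul_comm c 2, ← this]
  · intro h
    rw [Ideal.mem_span_singleton] at h
    obtain ⟨e, he⟩ := h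
    have := congrArg (MvPolynomial.eval (fun i : Fin 2 => if i = 1 then (0:K) else 1)) he
    simp at this

noncomputable def e2 (i j : ℕ) : Fin 2 →₀ ℕ := Finsupp.single 0 i + Finsupp.single 1 j

@[simp] lemma e2_apply0 (i j : ℕ) : e2 i j 0 = i := by
  simp [e2, Finsupp.single_apply]

@[simp] lemma e2_apply1 (i j : ℕ) : e2 i j 1 = j := by
  simp [e2, Finsupp.single_apply]

lemma e2_add (a b c d : ℕ) : e2 a b + e2 c d = e2 (a+c) (b+d) := by
  simp [e2, Finsupp.single_add]
  abel

lemma e2_eq (σ : Fin 2 →₀ ℕ) : e2 (σ 0) (σ 1) = σ := by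
  ext x
  fin_cases x <;> simp

section coeffs
variable {K : Type*} [CommRing K] (f : MvPowerSeries (Fin 2) K)

open MvPowerSeries

lemma coeff_X0_mul (i j : ℕ) :
    coeff (e2 (i+1) j) (X 0 * f) = coeff (e2 i j) f := by
  have : e2 (i+1) j = Finsupp.single 0 1 + e2 i j := by
    rw [show (Finsupp.single 0 1 : Fin 2 →₀ ℕ) = e2 1 0 by simp [e2], e2_add]; ring_nf
  rw [this, show (X 0 : MvPowerSeries (Fin 2) K) = monomial (Finsupp.single 0 1) 1 from rfl,
    MvPowerSeries.coeff_add_monomial_mul, one_mul]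

lemma coeff_X1_mul (i j : ℕ) :
    coeff (e2 i (j+1)) (X 1 * f) = coeff (e2 i j) f := by
  have : e2 i (j+1) = Finsupp.single 1 1 + e2 i j := by
    rw [show (Finsupp.single 1 1 : Fin 2 →₀ ℕ) = e2 0 1 by simp [e2], e2_add]; ring_nf
  rw [this, show (X 1 : MvPowerSeries (Fin 2) K) = monomial (Finsupp.single 1 1) 1 from rfl,
    MvPowerSeries.coeff_add_monomial_mul, one_mul]

lemma coeff_X0_mul_zero (j : ℕ) : coeff (e2 0 j) (X 0 * f) = 0 := by
  rw [show (X 0 : MvPowerSeries (Fin 2) K) = monomial (Finsupp.single 0 1) 1 from rfl,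
    MvPowerSeries.coeff_monomial_mul, if_neg]
  intro hle
  have := hle 0
  simp at this

lemma coeff_X1_mul_zero (i : ℕ) : coeff (e2 i 0) (X 1 * f) = 0 := by
  rw [show (X 1 : MvPowerSeries (Fin 2) K) = monomial (Finsupp.single 1 1) 1 from rfl,
    MvPowerSeries.coeff_monomial_mul, if_neg]
  intro hle
  have := hle 1
  simp at this

end coeffs

noncomputable def psl {K : Type*} [CommRing K] (y : MvPowerSeries (Fin 2) K) (m : ℕ) :
    Polynomial K :=
  ∑ n ∈ Finset.range (m+1), Polynomial.monomial n (MvPowerSeries.coeff (e2 n (m-n)) y)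

lemma psl_coeff {K : Type*} [CommRing K] (y : MvPowerSeries (Fin 2) K) (m p : ℕ) :
    (psl y m).coeff p = if p < m+1 then MvPowerSeries.coeff (e2 p (m-p)) y else 0 := by
  rw [psl, sum_monomial_coeff]

lemma finsupp_comp0 {p : (Fin 2 →₀ ℕ) × (Fin 2 →₀ ℕ)} {σ : Fin 2 →₀ ℕ}
    (h : p.1 + p.2 = σ) : p.1 0 + p.2 0 = σ 0 ∧ p.1 1 + p.2 1 = σ 1 := by
  constructor <;> (rw [← h]; simp)

lemma psl_mul {K : Type*} [CommRing K] (y : MvPowerSeries (Fin 2) K) (m : ℕ)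
    (IH : ∀ τ : Fin 2 →₀ ℕ, τ 0 + τ 1 < m → MvPowerSeries.coeff τ y = 0)
    (i j : ℕ) (hij : i + j = 2*m) :
    MvPowerSeries.coeff (e2 i j) (y * y) = ((psl y m) * (psl y m)).coeff i := by
  classical
  rw [MvPowerSeries.coeff_mul, Polynomial.coeff_mul]
  have hL : ∀ p ∈ Finset.HasAntidiagonal.antidiagonal (e2 i j),
      MvPowerSeries.coeff p.1 y * MvPowerSeries.coeff p.2 y ≠ 0 →
      p.1 0 + p.1 1 = m := by
    intro p hp hne
    rw [Finset.HasAntidiagonal.mem_antidiagonal] at hp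
    obtain ⟨h0, h1⟩ := finsupp_comp0 hp
    rw [e2_apply0] at h0; rw [e2_apply1] at h1
    by_contra hc
    apply hne
    rcases Nat.lt_or_ge (p.1 0 + p.1 1) m with h | h
    · rw [IH p.1 h, zero_mul]
    · have : p.2 0 + p.2 1 < m := by omega
      rw [IH p.2 this, mul_zero]
  have hR : ∀ p ∈ Finset.HasAntidiagonal.antidiagonal i,
      (psl y m).coeff p.1 * (psl y m).coeff p.2 ≠ 0 → p.1 ≤ m ∧ p.2 ≤ m := by
    intro p hp hne
    rw [Finset.HasAntidiagonal.mem_antidiagonal] at hp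
    by_contra hc
    apply hne
    rcases not_and_or.mp hc with h | h
    · rw [psl_coeff, if_neg (by omega), zero_mul]
    · rw [psl_coeff (p := p.2), if_neg (by omega), mul_zero]
  rw [← Finset.sum_filter_of_ne hL, ← Finset.sum_filter_of_ne hR]
  refine Finset.sum_nbij' (fun p => (p.1 0, p.2 0))
    (fun q => (e2 q.1 (m - q.1), e2 q.2 (m - q.2))) ?_ ?_ ?_ ?_ ?_
  · rintro ⟨α, β⟩ hm
    rw [Finset.mem_filter, Finset.HasAntidiagonal.mem_antidiagonal] at hm
    obtain ⟨hsum, hα⟩ := hm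
    dsimp only at hα ⊢
    obtain ⟨h0, h1⟩ := finsupp_comp0 hsum
    rw [e2_apply0] at h0; rw [e2_apply1] at h1
    dsimp only at h0 h1
    rw [Finset.mem_filter, Finset.HasAntidiagonal.mem_antidiagonal]
    exact ⟨h0, by omega, by omega⟩
  · rintro ⟨p, q⟩ hm
    rw [Finset.mem_filter, Finset.HasAntidiagonal.mem_antidiagonal] at hm
    obtain ⟨hsum, hp, hq⟩ := hm
    dsimp only at hp hq ⊢
    rw [Finset.mem_filter, Finset.HasAntidiagonal.mem_antidiagonal]
    constructor
    · rw [e2_add]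
      congr 1 <;> · omega
    · simp; omega
  · rintro ⟨α, β⟩ hm
    rw [Finset.mem_filter, Finset.HasAntidiagonal.mem_antidiagonal] at hm
    obtain ⟨hsum, hα⟩ := hm
    dsimp only at hα ⊢
    obtain ⟨h0, h1⟩ := finsupp_comp0 hsum
    rw [e2_apply0] at h0; rw [e2_apply1] at h1
    dsimp only at h0 h1
    have hβ : β 0 + β 1 = m := by omega
    have ea : m - α 0 = α 1 := by omega
    have eb : m - β 0 = β 1 := by omega
    rw [ea, eb, e2_eq, e2_eq]
  · rintro ⟨p, q⟩ hm
    dsimp only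
    simp
  · rintro ⟨α, β⟩ hm
    rw [Finset.mem_filter, Finset.HasAntidiagonal.mem_antidiagonal] at hm
    obtain ⟨hsum, hα⟩ := hm
    dsimp only at hα ⊢
    obtain ⟨h0, h1⟩ := finsupp_comp0 hsum
    rw [e2_apply0] at h0; rw [e2_apply1] at h1
    dsimp only at h0 h1
    have hβ : β 0 + β 1 = m := by omega
    rw [psl_coeff, psl_coeff, if_pos (by omega), if_pos (by omega)]
    have ea : m - α 0 = α 1 := by omega
    have eb : m - β 0 = β 1 := by omega
    rw [ea, eb, e2_eq, e2_eq]

lemma psl_natDegree {K : Type*} [CommRing K] (y : MvPowerSeries (Fin 2) K) (m : ℕ) :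
    (psl y m).natDegree ≤ m := by
  unfold psl
  apply Polynomial.natDegree_sum_le_of_forall_le
  intro n hn
  exact le_trans (Polynomial.natDegree_monomial_le _) (by
    simpa using Nat.lt_succ_iff.mp (Finset.mem_range.mp hn))

lemma psl_sq_coeff_zero {K : Type*} [CommRing K] (y : MvPowerSeries (Fin 2) K) (m k : ℕ)
    (hk : 2*m < k) : ((psl y m) * (psl y m)).coeff k = 0 := by
  apply Polynomial.coeff_eq_zero_of_natDegree_lt
  calc ((psl y m) * (psl y m)).natDegree ≤ (psl y m).natDegree + (psl y m).natDegree :=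
        Polynomial.natDegree_mul_le
    _ ≤ m + m := by have := psl_natDegree y m; omega
    _ < k := by omega

lemma step {K : Type*} [RCLike K] (y₁ y₂ : MvPowerSeries (Fin 2) K)
    (heq : MvPowerSeries.X 0 * (y₁*y₁)
      = MvPowerSeries.X 0 * (y₂*y₂) + MvPowerSeries.X 1 * (y₂*y₂))
    (m : ℕ)
    (IH1 : ∀ τ : Fin 2 →₀ ℕ, τ 0 + τ 1 < m → MvPowerSeries.coeff τ y₁ = 0)
    (IH2 : ∀ τ : Fin 2 →₀ ℕ, τ 0 + τ 1 < m → MvPowerSeries.coeff τ y₂ = 0) :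
    psl y₁ m = 0 ∧ psl y₂ m = 0 := by
  classical
  have hco : ∀ i j : ℕ, MvPowerSeries.coeff (e2 i j) (MvPowerSeries.X 0 * (y₁*y₁))
      = MvPowerSeries.coeff (e2 i j) (MvPowerSeries.X 0 * (y₂*y₂))
        + MvPowerSeries.coeff (e2 i j) (MvPowerSeries.X 1 * (y₂*y₂)) := by
    intro i j; rw [heq, map_add]
  have hpoly : Polynomial.X * (psl y₁ m * psl y₁ m)
      = Polynomial.X * (psl y₂ m * psl y₂ m) + (psl y₂ m * psl y₂ m) := by
    ext k
    match k with
    | 0 =>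
      have h0 := hco 0 (2*m+1)
      rw [coeff_X0_mul_zero, coeff_X0_mul_zero, coeff_X1_mul,
        psl_mul y₂ m IH2 0 (2*m) (by omega)] at h0
      simpa [Polynomial.mul_coeff_zero] using h0
    | (n+1) =>
      rw [Polynomial.coeff_add, Polynomial.coeff_X_mul, Polynomial.coeff_X_mul]
      rcases lt_trichotomy n (2*m) with h | h | h
      · have hn := hco (n+1) (2*m-n)
        have hrw : 2*m-n = (2*m-n-1)+1 := by omega
        rw [hrw, coeff_X0_mul, coeff_X0_mul, coeff_X1_mul,
          psl_mul y₁ m IH1 n (2*m-n-1+1) (by omega),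
          psl_mul y₂ m IH2 n (2*m-n-1+1) (by omega),
          psl_mul y₂ m IH2 (n+1) (2*m-n-1) (by omega)] at hn
        exact hn
      · subst h
        have hn := hco (2*m+1) 0
        rw [coeff_X0_mul, coeff_X0_mul, coeff_X1_mul_zero,
          psl_mul y₁ m IH1 (2*m) 0 (by omega),
          psl_mul y₂ m IH2 (2*m) 0 (by omega)] at hn
        rw [psl_sq_coeff_zero y₂ m (2*m+1) (by omega)]
        exact hn
      · rw [psl_sq_coeff_zero y₁ m n (by omega), psl_sq_coeff_zero y₂ m n (by omega),
          psl_sq_coeff_zero y₂ m (n+1) (by omega)]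
        simp
  have hb : psl y₂ m = 0 := by
    by_contra hbne
    have hX1 : (Polynomial.X + 1 : Polynomial K) ≠ 0 := by
      intro h
      have := congrArg (fun p => Polynomial.coeff p 1) h
      simp [Polynomial.coeff_one] at this
    have hform : Polynomial.X * (psl y₁ m * psl y₁ m) = (Polynomial.X + 1) * (psl y₂ m * psl y₂ m) := by
      rw [hpoly]; ring
    have hbb : psl y₂ m * psl y₂ m ≠ 0 := mul_ne_zero hbne hbne
    have hRne : (Polynomial.X + 1) * (psl y₂ m * psl y₂ m) ≠ 0 := mul_ne_zero hX1 hbb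
    have haa : psl y₁ m * psl y₁ m ≠ 0 := by
      intro h
      rw [h, mul_zero] at hform
      exact hRne hform.symm
    have hane : psl y₁ m ≠ 0 := fun h => haa (by rw [h, mul_zero])
    have hXne : (Polynomial.X : Polynomial K) ≠ 0 := Polynomial.X_ne_zero
    have hrm := congrArg (Polynomial.rootMultiplicity (0:K)) hform
    rw [Polynomial.rootMultiplicity_mul (mul_ne_zero hXne haa),
      Polynomial.rootMultiplicity_mul haa,
      Polynomial.rootMultiplicity_mul hRne,
      Polynomial.rootMultiplicity_mul hbb] at hrm
    have hX : Polynomial.rootMultiplicity (0:K) Polynomial.X = 1 := by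
      have : (Polynomial.X : Polynomial K) = Polynomial.X - Polynomial.C 0 := by simp
      rw [this, Polynomial.rootMultiplicity_X_sub_C_self]
    have hX1rm : Polynomial.rootMultiplicity (0:K) (Polynomial.X + 1) = 0 := by
      apply Polynomial.rootMultiplicity_eq_zero
      simp [Polynomial.IsRoot]
    rw [hX, hX1rm] at hrm
    omega
  refine ⟨?_, hb⟩
  rw [hb] at hpoly
  simp only [mul_zero, add_zero] at hpoly
  have : psl y₁ m * psl y₁ m = 0 := by
    have := hpoly
    exact (mul_eq_zero.mp this).resolve_left Polynomial.X_ne_zero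
  exact mul_self_eq_zero.mp this

lemma part2 {K : Type*} [RCLike K] (y₁ y₂ : MvPowerSeries (Fin 2) K)
    (heq : MvPowerSeries.X 0 * y₁ ^ 2 = (MvPowerSeries.X 0 + MvPowerSeries.X 1) * y₂ ^ 2) :
    y₁ = 0 ∧ y₂ = 0 := by
  have heq' : MvPowerSeries.X 0 * (y₁*y₁)
      = MvPowerSeries.X 0 * (y₂*y₂) + MvPowerSeries.X 1 * (y₂*y₂) := by
    linear_combination heq
  have main : ∀ m : ℕ, ∀ σ : Fin 2 →₀ ℕ, σ 0 + σ 1 = m →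
      MvPowerSeries.coeff σ y₁ = 0 ∧ MvPowerSeries.coeff σ y₂ = 0 := by
    intro m
    induction m using Nat.strong_induction_on with
    | _ m IH =>
      have IH1 : ∀ τ : Fin 2 →₀ ℕ, τ 0 + τ 1 < m → MvPowerSeries.coeff τ y₁ = 0 :=
        fun τ h => (IH _ h τ rfl).1
      have IH2 : ∀ τ : Fin 2 →₀ ℕ, τ 0 + τ 1 < m → MvPowerSeries.coeff τ y₂ = 0 :=
        fun τ h => (IH _ h τ rfl).2
      obtain ⟨ha, hb⟩ := step y₁ y₂ heq' m IH1 IH2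
      intro σ hσ
      have hσ0 : σ 0 < m + 1 := by omega
      have hσ1 : m - σ 0 = σ 1 := by omega
      constructor
      · have := congrArg (fun p => Polynomial.coeff p (σ 0)) ha
        simp only [Polynomial.coeff_zero] at this
        rw [psl_coeff, if_pos hσ0, hσ1, e2_eq] at this
        exact this
      · have := congrArg (fun p => Polynomial.coeff p (σ 0)) hb
        simp only [Polynomial.coeff_zero] at this
        rw [psl_coeff, if_pos hσ0, hσ1, e2_eq] at this
        exact this
  constructor <;> [skip; skip] <;>
    · apply MvPowerSeries.ext
      intro σ
      rw [map_zero]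
      first
      | exact (main _ σ rfl).1
      | exact (main _ σ rfl).2


/-- For F(x,t,y₁,y₂) = x·y₁² − (x+t)·y₂² (K = ℝ or ℂ): for every c there
are polynomials y₁,y₂ ∈ K[x,t] with F(y₁,y₂) ∈ (t)^{c+1} and y₂ ∉ (t), yet the only
solution of F = 0 in K[[x,t]]² is (0,0). -/
theorem stmt_3 (K : Type*) [RCLike K] :
    (∀ c : ℕ, ∃ y₁ y₂ : MvPolynomial (Fin 2) K,
      MvPolynomial.X 0 * y₁ ^ 2 - (MvPolynomial.X 0 + MvPolynomial.X 1) * y₂ ^ 2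
        ∈ (Ideal.span {(MvPolynomial.X 1 : MvPolynomial (Fin 2) K)}) ^ (c + 1)
      ∧ y₂ ∉ Ideal.span {(MvPolynomial.X 1 : MvPolynomial (Fin 2) K)})
    ∧
    (∀ y₁ y₂ : MvPowerSeries (Fin 2) K,
      MvPowerSeries.X 0 * y₁ ^ 2 = (MvPowerSeries.X 0 + MvPowerSeries.X 1) * y₂ ^ 2
      → y₁ = 0 ∧ y₂ = 0) :=
  ⟨part1 K, fun y₁ y₂ heq => part2 y₁ y₂ heq⟩
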